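/- Let $F$ be a field containing an algebraically closed subfield $D$ (in particular, $F$ contains the algebraic closure of its prime field). Then $F$ has embedded residue: there exist an elementary extension $F^*$ of $F$ and a nontrivial valuation $v$ on $F^*$ such that $F^* v$ embeds into $F^*$. -/

import Mathlib

open FirstOrder

universe u

/-- A ring homomorphism is an elementary embedding for the language of rings. -/
def IsElementaryRingHom {F F' : Type*} [Ring F] [Ring F'] (f : F →+* F') : Prop :=
  letI := Ring.compatibleRingOfRing F
  letI := Ring.compatibleRingOfRing F'
  ∀ (n : ℕ) (φ : Language.ring.Formula (Fin n)) (v : Fin n → F),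
    φ.Realize (f ∘ v) ↔ φ.Realize v

universe v

section Helpers

theorem isField_of_ringEquiv {R S : Type*} [CommRing R] [CommRing S] (e : R ≃+* S)
    (h : IsField R) : IsField S := by
  refine ⟨?_, mul_comm, ?_⟩
  · obtain ⟨x, y, hxy⟩ := h.exists_pair_ne
    exact ⟨e x, e y, fun h' => hxy (e.injective h')⟩
  · intro a ha
    obtain ⟨b, hb⟩ := h.mul_inv_cancel (a := e.symm a) (by
      intro h0; apply ha; simpa using congrArg e h0)
    exact ⟨e b, by simpa using congrArg e hb⟩

variable {K : Type v} [Field K] (E : Subfield K)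

/-- The canonical inclusion of `↥E.toSubring` into a subring containing it. -/
def inclE {S : Subring K} (h : E.toSubring ≤ S) : ↥E.toSubring →+* ↥S :=
  Subring.inclusion h

/-- Nonunit (or outside) element of a local subring. -/
def NU (A : LocalSubring K) (c : K) : Prop :=
  ∃ h : c ∈ A.toSubring, ¬ IsUnit (⟨c, h⟩ : A.toSubring)

/-- Residue-algebraicity over `E`, elementwise. -/
def ResAlg (A : LocalSubring K) : Prop :=
  ∀ c ∈ A.toSubring, ∃ p : Polynomial K, p.Monic ∧ (∀ i, p.coeff i ∈ E) ∧ NU A (p.eval c)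

variable (t : K)

def Good (A : LocalSubring K) : Prop :=
  E.toSubring ≤ A.toSubring ∧ NU A t ∧ ResAlg E A

theorem NU.mono {A B : LocalSubring K} (hAB : A ≤ B) {c : K} (h : NU A c) : NU B c := by
  obtain ⟨hc, hu⟩ := h
  refine ⟨hAB.1 hc, fun h' => hu ?_⟩
  have := hAB.2
  exact this.1 (a := ⟨c, hc⟩) h'

/-- The range of a ring hom from `↥E.toSubring` into a field is a subfield. -/
def ERange {k : Type*} [Field k] (ψ : ↥E.toSubring →+* k) : Subfield k where
  __ := ψ.range
  inv_mem' := by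
    rintro y ⟨e, rfl⟩
    by_cases he : e = 0
    · exact ⟨0, by simp [he]⟩
    · have he1 : (e : K) ≠ 0 := fun h0 => he (Subtype.ext h0)
      have hinv : (e : K)⁻¹ ∈ E.toSubring := E.inv_mem e.2
      refine ⟨⟨(e : K)⁻¹, hinv⟩, ?_⟩
      have h2 : e * ⟨(e : K)⁻¹, hinv⟩ = 1 := Subtype.ext (mul_inv_cancel₀ he1)
      have h1 : ψ ⟨(e : K)⁻¹, hinv⟩ * ψ e = 1 := by rw [mul_comm, ← map_mul, h2, map_one]
      exact eq_inv_of_mul_eq_one_left h1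

theorem mem_ERange_iff {k : Type*} [Field k] (ψ : ↥E.toSubring →+* k) (y : k) :
    y ∈ ERange E ψ ↔ y ∈ ψ.range := Iff.rfl

end Helpers

section AlgLemma

variable {K : Type v} [Field K] (E : Subfield K)

open Polynomial

theorem map_eval' {R S : Type*} [CommRing R] [CommRing S] (f : R →+* S) (q : Polynomial R)
    (a : R) : f (q.eval a) = (q.map f).eval (f a) := by
  rw [Polynomial.eval_map, Polynomial.eval₂_hom]

/-- If `θ (p.eval a) = 0` for a monic `p` with coefficients in `E`, then `θ a` is integral
over any subfield `F` of `k` containing the image of `E`. -/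
theorem isIntegral_of_poly {S : Subring K} (hES : E.toSubring ≤ S) {k : Type*} [Field k]
    (θ : ↥S →+* k) (F : Subfield k) (hF : ∀ e : ↥E.toSubring, θ (inclE E hES e) ∈ F)
    (a : ↥S) (p : Polynomial K) (hmonic : p.Monic) (hcoe : ∀ i, p.coeff i ∈ E)
    (hmem : p.eval (a : K) ∈ S) (h0 : θ ⟨p.eval (a : K), hmem⟩ = 0) :
    IsIntegral ↥F (θ a) := by
  have hfr : ↑p.coeffs ⊆ (E.toSubring : Set K) := by
    intro c hc
    simp only [Finset.mem_coe, Polynomial.mem_coeffs_iff] at hc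
    obtain ⟨i, _, rfl⟩ := hc
    exact hcoe i
  set q₀ : Polynomial ↥E.toSubring := p.toSubring E.toSubring hfr with hq₀
  have hq₀m : q₀.Monic := (Polynomial.monic_toSubring _ _ _).mpr hmonic
  set ι : ↥E.toSubring →+* ↥S := inclE E hES with hι
  let g : ↥E.toSubring →+* ↥F := (θ.comp ι).codRestrict F.toSubring (fun e => hF e)
  refine ⟨q₀.map g, hq₀m.map g, ?_⟩
  have hev1 : S.subtype ((q₀.map ι).eval a) = p.eval (a : K) := by
    have h1 := map_eval' S.subtype (q₀.map ι) a
    rw [Polynomial.map_map] at h1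
    have h2 : S.subtype.comp ι = E.toSubring.subtype := rfl
    rw [h2, Polynomial.map_toSubring] at h1
    exact h1
  have key : θ ((q₀.map ι).eval a) = 0 := by
    rw [show (q₀.map ι).eval a = ⟨p.eval (a : K), hmem⟩ from Subtype.ext hev1]
    exact h0
  calc Polynomial.eval₂ (algebraMap ↥F k) (θ a) (q₀.map g)
      = (((q₀.map g)).map (algebraMap ↥F k)).eval (θ a) := by rw [Polynomial.eval_map]
    _ = ((q₀.map ι).map θ).eval (θ a) := by
        rw [Polynomial.map_map, Polynomial.map_map]
        rfl
    _ = θ ((q₀.map ι).eval a) := (map_eval' θ (q₀.map ι) a).symm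
    _ = 0 := key

end AlgLemma

section Step

variable {K : Type v} [Field K] (E : Subfield K) (t : K)

open Polynomial IsLocalRing

theorem closure_sub (A : LocalSubring K) (x : K) :
    A.toSubring ≤ Subring.closure ((A.toSubring : Set K) ∪ {x}) :=
  fun a ha => Subring.subset_closure (Or.inl ha)

set_option maxHeartbeats 1000000 in
set_option synthInstance.maxHeartbeats 1000000 in
theorem step (A : LocalSubring K) (hEA : E.toSubring ≤ A.toSubring) (hres : ResAlg E A)
    (x : K) (ht' : t ∈ Subring.closure ((A.toSubring : Set K) ∪ {x}))
    (hJ : Ideal.map (Subring.inclusion (closure_sub A x))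
        (IsLocalRing.maximalIdeal ↥A.toSubring) ⊔
        Ideal.span {(⟨t, ht'⟩ : ↥(Subring.closure ((A.toSubring : Set K) ∪ {x})))} ≠ ⊤) :
    ∃ B : LocalSubring K, Good E t B ∧ A ≤ B ∧ x ∈ B.toSubring := by
  classical
  set S' : Subring K := Subring.closure ((A.toSubring : Set K) ∪ {x}) with hS'
  set ι : ↥A.toSubring →+* ↥S' := Subring.inclusion (closure_sub A x) with hιdef
  obtain ⟨M, hMmax, hJM⟩ := Ideal.exists_le_maximal _ hJ
  haveI := hMmax
  have hxS' : x ∈ S' := Subring.subset_closure (Or.inr rfl)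
  have hES' : E.toSubring ≤ S' := hEA.trans (closure_sub A x)
  have hmemM : ∀ a : ↥A.toSubring, a ∈ maximalIdeal ↥A.toSubring → ι a ∈ M :=
    fun a ha => (le_sup_left.trans hJM) (Ideal.mem_map_of_mem ι ha)
  have htM : (⟨t, ht'⟩ : ↥S') ∈ M :=
    (le_sup_right.trans hJM) (Ideal.subset_span rfl)
  set B : LocalSubring K := LocalSubring.ofPrime S' M with hB
  have hS'B : S' ≤ B.toSubring := LocalSubring.le_ofPrime S' M
  have halgB : ∀ s : ↥S', algebraMap ↥S' ↥B.toSubring s = Subring.inclusion hS'B s := fun _ => rfl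
  -- A is dominated by B
  have hAB : A ≤ B := by
    refine ⟨(closure_sub A x).trans hS'B, ⟨?_⟩⟩
    intro a ha
    by_contra h
    have hmem : ι a ∈ M := hmemM a (by rwa [IsLocalRing.mem_maximalIdeal, mem_nonunits_iff])
    have : IsUnit (algebraMap ↥S' ↥B.toSubring (ι a)) := ha
    exact ((IsLocalization.AtPrime.isUnit_to_map_iff ↥B.toSubring M (ι a)).mp this) hmem
  refine ⟨B, ⟨hES'.trans hS'B, ?_, ?_⟩, hAB, hS'B hxS'⟩
  · -- t is a nonunit in B
    refine ⟨hS'B ht', fun hu => ?_⟩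
    have : IsUnit (algebraMap ↥S' ↥B.toSubring ⟨t, ht'⟩) := hu
    exact ((IsLocalization.AtPrime.isUnit_to_map_iff ↥B.toSubring M ⟨t, ht'⟩).mp this) htM
  · -- ResAlg E B
    letI kField : Field (↥S' ⧸ M) := Ideal.Quotient.field M
    set θ : ↥S' →+* ↥S' ⧸ M := Ideal.Quotient.mk M with hθ
    set θA : ↥A.toSubring →+* ↥S' ⧸ M := θ.comp ι with hθA
    set Ebar : Subfield (↥S' ⧸ M) := ERange E (θ.comp (inclE E hES')) with hEbar
    have hFmem : ∀ e : ↥E.toSubring, θ (inclE E hES' e) ∈ Ebar := fun e => ⟨e, rfl⟩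
    -- residues of A are integral over Ebar
    have hAint : ∀ a : ↥A.toSubring, IsIntegral ↥Ebar (θA a) := by
      intro a
      obtain ⟨p, hpm, hpc, hmem, hnu⟩ := hres a.1 a.2
      have hmemS' : p.eval ((ι a : ↥S') : K) ∈ S' := closure_sub A x hmem
      have h0 : θ ⟨p.eval ((ι a : ↥S') : K), hmemS'⟩ = 0 := by
        have hm : (⟨p.eval (a.1 : K), hmem⟩ : ↥A.toSubring) ∈ maximalIdeal ↥A.toSubring := by
          rwa [IsLocalRing.mem_maximalIdeal, mem_nonunits_iff]
        have := hmemM _ hm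
        rw [Ideal.Quotient.eq_zero_iff_mem]
        exact this
      exact isIntegral_of_poly E hES' θ Ebar hFmem (ι a) p hpm hpc hmemS' h0
    -- the image of A is a subfield
    have hker : RingHom.ker θA = maximalIdeal ↥A.toSubring := by
      refine le_antisymm (IsLocalRing.le_maximalIdeal ?_) ?_
      · intro hk
        have h1 : θA 1 = 0 := by rw [← RingHom.mem_ker, hk]; trivial
        rw [map_one] at h1
        exact one_ne_zero h1
      · intro a ha
        rw [RingHom.mem_ker]
        exact Ideal.Quotient.eq_zero_iff_mem.mpr (hmemM a ha)
    have hIsFieldRange : IsField ↥θA.range := by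
      have e2 : (↥A.toSubring ⧸ RingHom.ker θA) ≃+* ↥θA.range :=
        RingHom.quotientKerEquivRange θA
      have e1 : (↥A.toSubring ⧸ maximalIdeal ↥A.toSubring) ≃+* ↥A.toSubring ⧸ RingHom.ker θA :=
        Ideal.quotEquivOfEq hker.symm
      have hf : IsField (↥A.toSubring ⧸ maximalIdeal ↥A.toSubring) :=
        Field.toIsField (IsLocalRing.ResidueField ↥A.toSubring)
      exact isField_of_ringEquiv (e1.trans e2) hf
    set kA : Subfield (↥S' ⧸ M) :=
      { θA.range with
        inv_mem' := by
          rintro y hy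
          by_cases hy0 : y = 0
          · subst hy0
            rw [inv_zero]
            exact Subring.zero_mem _
          · obtain ⟨b, hb⟩ := hIsFieldRange.mul_inv_cancel
              (a := (⟨y, hy⟩ : ↥θA.range)) (fun h => hy0 (congrArg Subtype.val h))
            have hb1 : y * (b : ↥S' ⧸ M) = 1 := congrArg Subtype.val hb
            exact (inv_eq_of_mul_eq_one_right hb1) ▸ b.2 } with hkA
    have hkAmem : ∀ y, y ∈ kA ↔ y ∈ θA.range := fun y => Iff.rfl
    have hEkA : ∀ y ∈ Ebar, y ∈ kA := by
      rintro y ⟨e, rfl⟩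
      exact ⟨⟨e.1, hEA e.2⟩, rfl⟩
    set xbar : ↥S' ⧸ M := θ ⟨x, hxS'⟩ with hxbar
    -- the quotient is generated by kA and xbar
    have htop : ∀ r : ↥S' ⧸ M, r ∈ Subring.closure ((kA : Set (↥S' ⧸ M)) ∪ {xbar}) := by
      intro r
      obtain ⟨z, rfl⟩ := Ideal.Quotient.mk_surjective r
      set C := Subring.closure ((kA : Set (↥S' ⧸ M)) ∪ {xbar}) with hC
      set V : Subring K := Subring.map S'.subtype (C.comap θ) with hV
      have hle : S' ≤ V := by
        rw [hS']
        refine Subring.closure_le.mpr ?_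
        rintro c (hc | hc)
        · exact ⟨⟨c, closure_sub A x hc⟩, Subring.subset_closure (Or.inl ⟨⟨c, hc⟩, rfl⟩), rfl⟩
        · rw [Set.mem_singleton_iff] at hc
          subst hc
          exact ⟨⟨c, hxS'⟩, Subring.subset_closure (Or.inr rfl), rfl⟩
      obtain ⟨w, hw, hwz⟩ := hle z.2
      have : w = z := Subtype.ext hwz
      subst this
      exact hw
    -- xbar is integral over kA
    have hxint : IsIntegral ↥kA xbar := by
      by_contra hni
      have htr : Transcendental ↥kA xbar := fun halg => hni halg.isIntegral
      have hinj := transcendental_iff_injective.mp htr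
      have hsurj : Function.Surjective (Polynomial.aeval (R := ↥kA) xbar) := by
        intro r
        have hr := htop r
        have hle2 : Subring.closure ((kA : Set (↥S' ⧸ M)) ∪ {xbar}) ≤
            (Polynomial.aeval (R := ↥kA) xbar).range.toSubring := by
          refine Subring.closure_le.mpr ?_
          rintro c (hc | hc)
          · refine ⟨Polynomial.C ⟨c, hc⟩, ?_⟩
            show (Polynomial.aeval (R := ↥kA) xbar) (Polynomial.C ⟨c, hc⟩) = c
            rw [Polynomial.aeval_C]; rfl
          · rw [Set.mem_singleton_iff] at hc; subst hc
            exact ⟨Polynomial.X, Polynomial.aeval_X _⟩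
        obtain ⟨q, hq⟩ := hle2 hr
        exact ⟨q, hq⟩
      have e := RingEquiv.ofBijective
        ((Polynomial.aeval (R := ↥kA) xbar) : Polynomial ↥kA →ₐ[↥kA] (↥S' ⧸ M)).toRingHom
        ⟨hinj, hsurj⟩
      exact Polynomial.not_isField ↥kA (isField_of_ringEquiv e.symm (Field.toIsField (↥S' ⧸ M)))
    letI : Algebra ↥Ebar ↥kA := (Subfield.inclusion (fun {y} hy => hEkA y hy)).toAlgebra
    haveI : IsScalarTower ↥Ebar ↥kA (↥S' ⧸ M) := IsScalarTower.of_algebraMap_eq (fun e => rfl)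
    haveI hAlg1 : Algebra.IsIntegral ↥Ebar ↥kA := by
      constructor
      intro r
      obtain ⟨a, ha⟩ := r.2
      have h1 : IsIntegral ↥Ebar (algebraMap ↥kA (↥S' ⧸ M) r) := by
        have heq : algebraMap ↥kA (↥S' ⧸ M) r = θA a := ha.symm
        rw [heq]
        exact hAint a
      have hinj2 : Function.Injective (algebraMap ↥kA (↥S' ⧸ M)) :=
        fun u v huv => Subtype.ext huv
      exact (isIntegral_algebraMap_iff hinj2).mp h1
    have hall : ∀ r : ↥S' ⧸ M, IsIntegral ↥Ebar r := by
      intro r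
      have hr := htop r
      have hle3 : Subring.closure ((kA : Set (↥S' ⧸ M)) ∪ {xbar}) ≤
          (integralClosure ↥Ebar (↥S' ⧸ M)).toSubring := by
        refine Subring.closure_le.mpr ?_
        rintro c (hc | hc)
        · exact (hAlg1.1 ⟨c, hc⟩).algebraMap
        · rw [Set.mem_singleton_iff] at hc; subst hc
          exact isIntegral_trans xbar hxint
      exact hle3 hr
    -- ResAlg E B
    intro c hc
    have hunits : ∀ s : M.primeCompl, IsUnit (θ (s : ↥S')) := by
      intro s
      refine isUnit_iff_ne_zero.mpr ?_
      rw [Ne, Ideal.Quotient.eq_zero_iff_mem]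
      exact s.2
    set ρ : ↥B.toSubring →+* ↥S' ⧸ M :=
      IsLocalization.lift (M := M.primeCompl) (S := ↥B.toSubring) hunits with hρ
    have hρθ : ∀ s : ↥S', ρ (algebraMap ↥S' ↥B.toSubring s) = θ s :=
      fun s => IsLocalization.lift_eq hunits s
    obtain ⟨q, hqm, hq0⟩ := hall (ρ ⟨c, hc⟩)
    set gE : ↥E.toSubring →+* ↥Ebar :=
      (θ.comp (inclE E hES')).codRestrict Ebar.toSubring (fun e => hFmem e) with hgEdef
    have hgE : Function.Surjective gE := by
      rintro ⟨y, e, rfl⟩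
      exact ⟨e, rfl⟩
    have hlift : q ∈ Polynomial.lifts gE :=
      (Polynomial.lifts_iff_coeff_lifts q).mpr (fun n => hgE (q.coeff n))
    obtain ⟨p₀, hp₀map, -, hp₀m⟩ := Polynomial.lifts_and_degree_eq_and_monic hlift hqm
    refine ⟨p₀.map E.toSubring.subtype, hp₀m.map _, ?_, ?_⟩
    · intro i; rw [Polynomial.coeff_map]; exact (p₀.coeff i).2
    · set ιB : ↥E.toSubring →+* ↥B.toSubring := Subring.inclusion (hES'.trans hS'B) with hιB
      set r' : ↥B.toSubring := (p₀.map ιB).eval ⟨c, hc⟩ with hr'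
      have hval : B.toSubring.subtype r' = (p₀.map E.toSubring.subtype).eval c := by
        have h1 := map_eval' B.toSubring.subtype (p₀.map ιB) ⟨c, hc⟩
        rw [Polynomial.map_map] at h1
        have h2 : (B.toSubring.subtype).comp ιB = E.toSubring.subtype := rfl
        rw [h2] at h1
        exact h1
      have hmem2 : (p₀.map E.toSubring.subtype).eval c ∈ B.toSubring := hval ▸ r'.2
      refine ⟨hmem2, ?_⟩
      intro hu
      have hru : IsUnit r' := by
        have he : (⟨(p₀.map E.toSubring.subtype).eval c, hmem2⟩ : ↥B.toSubring) = r' :=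
          Subtype.ext hval.symm
        rwa [he] at hu
      have hρr' : ρ r' = 0 := by
        have h1 := map_eval' ρ (p₀.map ιB) ⟨c, hc⟩
        have h2 : (p₀.map ιB).map ρ = q.map (algebraMap ↥Ebar (↥S' ⧸ M)) := by
          rw [Polynomial.map_map, ← hp₀map, Polynomial.map_map]
          congr 1
          refine RingHom.ext (fun e => ?_)
          show ρ (ιB e) = algebraMap ↥Ebar (↥S' ⧸ M) (gE e)
          have h3 : ιB e = algebraMap ↥S' ↥B.toSubring (inclE E hES' e) := rfl
          rw [h3, hρθ]
          rfl
        rw [h1, h2, Polynomial.eval_map]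
        exact hq0
      have hzu : IsUnit (0 : ↥S' ⧸ M) := hρr' ▸ hru.map ρ
      exact zero_ne_one (isUnit_zero_iff.mp hzu)

end Step

section Zorn

variable {K : Type v} [Field K]

open IsLocalRing

theorem chainUB (s : Set (LocalSubring K)) (H : IsChain (· ≤ ·) s) (hne : s.Nonempty) :
    ∃ ub : LocalSubring K, (∀ z ∈ s, z ≤ ub) ∧
      ∀ c ∈ ub.toSubring, ∃ A ∈ s, c ∈ A.toSubring := by
  have inst : Nonempty s := ⟨⟨hne.choose, hne.choose_spec⟩⟩
  have hdir := H.directed.mono_comp _ LocalSubring.toSubring_mono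
  refine ⟨@LocalSubring.mk _ _ (⨆ i : s, i.1.toSubring) ⟨?_⟩, ?_, ?_⟩
  · intro ⟨a, ha⟩ ⟨b, hb⟩ e
    obtain ⟨A, haA : a ∈ A.1.toSubring⟩ := (Subring.mem_iSup_of_directed hdir).mp ha
    obtain ⟨B, hbB : b ∈ B.1.toSubring⟩ := (Subring.mem_iSup_of_directed hdir).mp hb
    obtain ⟨C, hCA, hCB⟩ := hdir A B
    refine (C.1.2.2 (a := ⟨a, hCA haA⟩) (b := ⟨b, hCB hbB⟩) (Subtype.ext congr(($e).1))).imp ?_ ?_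
    · exact fun h => h.map (Subring.inclusion (le_iSup (fun i : s => i.1.toSubring) C))
    · exact fun h => h.map (Subring.inclusion (le_iSup (fun i : s => i.1.toSubring) C))
  · intro A hA
    refine ⟨le_iSup (fun i : s => i.1.toSubring) ⟨A, hA⟩, ⟨?_⟩⟩
    rintro ⟨a, haA⟩ h
    obtain ⟨⟨b, hb⟩, e⟩ := isUnit_iff_exists_inv.mp h
    obtain ⟨B, hbB : b ∈ B.1.toSubring⟩ := (Subring.mem_iSup_of_directed hdir).mp hb
    obtain ⟨C, hCA, hCB⟩ := H.directed ⟨A, hA⟩ B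
    apply hCA.2.1
    exact isUnit_iff_exists_inv.mpr ⟨⟨b, hCB.1 hbB⟩, Subtype.ext congr(($e).1)⟩
  · intro c hc
    obtain ⟨A, hA⟩ := (Subring.mem_iSup_of_directed hdir).mp hc
    exact ⟨A.1, A.2, hA⟩

end Zorn

section Key

variable {K : Type v} [Field K]

open Polynomial IsLocalRing

/-- Polynomial expressions over `E` evaluated at `x`. -/
def evalSubring (E : Subfield K) (x : K) : Subring K where
  carrier := { c | ∃ p : Polynomial K, (∀ i, p.coeff i ∈ E) ∧ p.eval x = c }
  one_mem' := ⟨1, fun i => by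
    rw [Polynomial.coeff_one]
    split
    exacts [E.one_mem, E.zero_mem], by simp⟩
  zero_mem' := ⟨0, fun i => by rw [Polynomial.coeff_zero]; exact E.zero_mem, by simp⟩
  add_mem' := by
    rintro a b ⟨p, hp, rfl⟩ ⟨q, hq, rfl⟩
    exact ⟨p + q, fun i => by rw [Polynomial.coeff_add]; exact add_mem (hp i) (hq i), by simp⟩
  neg_mem' := by
    rintro a ⟨p, hp, rfl⟩
    exact ⟨-p, fun i => by rw [Polynomial.coeff_neg]; exact neg_mem (hp i), by simp⟩
  mul_mem' := by
    rintro a b ⟨p, hp, rfl⟩ ⟨q, hq, rfl⟩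
    refine ⟨p * q, fun i => by
      rw [Polynomial.coeff_mul]
      exact Subring.sum_mem _ (fun k _ => mul_mem (hp _) (hq _)), by simp⟩

/-- The trivial ring equivalence between `↥E` and `↥E.toSubring`. -/
def subfieldEquivSubring (E : Subfield K) : ↥E ≃+* ↥E.toSubring where
  toFun x := ⟨x.1, x.2⟩
  invFun x := ⟨x.1, x.2⟩
  left_inv x := rfl
  right_inv x := rfl
  map_mul' x y := rfl
  map_add' x y := rfl

set_option maxHeartbeats 1000000 in
set_option synthInstance.maxHeartbeats 1000000 in
theorem key (E : Subfield K) (hE : IsAlgClosed ↥E) (t : K)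
    (htE : ∀ p : Polynomial K, (∀ i, p.coeff i ∈ E) → p.eval t = 0 → p = 0) :
    ∃ O : ValuationSubring K, O ≠ ⊤ ∧ Nonempty (IsLocalRing.ResidueField ↥O →+* K) := by
  classical
  have hXcoeff : ∀ i, (Polynomial.X : Polynomial K).coeff i ∈ E := by
    intro i; rw [Polynomial.coeff_X]; split
    exacts [E.one_mem, E.zero_mem]
  have ht0 : t ≠ 0 := by
    intro h
    have := htE Polynomial.X hXcoeff (by simp [h])
    exact Polynomial.X_ne_zero this
  haveI hloc : IsLocalRing ↥E.toSubring := (subfieldEquivSubring E).isLocalRing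
  have hfieldE : IsField ↥E.toSubring :=
    isField_of_ringEquiv (subfieldEquivSubring E) (Field.toIsField ↥E)
  set A0 : LocalSubring K := LocalSubring.mk E.toSubring with hA0
  have hresE : ResAlg E A0 := by
    intro c hc
    refine ⟨Polynomial.X - Polynomial.C c, Polynomial.monic_X_sub_C c, ?_, ?_⟩
    · intro i
      rw [Polynomial.coeff_sub, Polynomial.coeff_X, Polynomial.coeff_C]
      match i with
      | 0 => simpa using E.neg_mem hc
      | 1 => simpa using E.one_mem
      | (n+2) => simpa using E.zero_mem
    · rw [Polynomial.eval_sub, Polynomial.eval_X, Polynomial.eval_C, sub_self]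
      refine ⟨Subring.zero_mem _, fun hu => ?_⟩
      have h0 : (⟨(0 : K), Subring.zero_mem _⟩ : ↥A0.toSubring) = 0 := rfl
      rw [h0] at hu
      exact zero_ne_one (congrArg Subtype.val (isUnit_zero_iff.mp hu))
  have ht' : t ∈ Subring.closure ((A0.toSubring : Set K) ∪ {t}) :=
    Subring.subset_closure (Or.inr rfl)
  have hJ0 : Ideal.map (Subring.inclusion (closure_sub A0 t))
      (IsLocalRing.maximalIdeal ↥A0.toSubring) ⊔
      Ideal.span {(⟨t, ht'⟩ : ↥(Subring.closure ((A0.toSubring : Set K) ∪ {t})))} ≠ ⊤ := by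
    have hm0 : IsLocalRing.maximalIdeal ↥A0.toSubring = ⊥ :=
      IsLocalRing.isField_iff_maximalIdeal_eq.mp hfieldE
    rw [hm0, Ideal.map_bot, bot_sup_eq]
    intro hTop
    have h1 : (1 : ↥(Subring.closure ((A0.toSubring : Set K) ∪ {t}))) ∈
        Ideal.span {(⟨t, ht'⟩ : ↥(Subring.closure ((A0.toSubring : Set K) ∪ {t})))} := by
      rw [hTop]; trivial
    obtain ⟨u, hu⟩ := Ideal.mem_span_singleton'.mp h1
    have hcl : Subring.closure ((A0.toSubring : Set K) ∪ {t}) ≤ evalSubring E t := by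
      refine Subring.closure_le.mpr ?_
      rintro c (hc | hc)
      · exact ⟨Polynomial.C c, fun i => by
          rw [Polynomial.coeff_C]; split
          exacts [hc, E.zero_mem], Polynomial.eval_C⟩
      · rw [Set.mem_singleton_iff] at hc; subst hc
        exact ⟨Polynomial.X, hXcoeff, Polynomial.eval_X⟩
    obtain ⟨g, hgc, hge⟩ := hcl u.2
    have huval : (u : K) * t = 1 := congrArg Subtype.val hu
    set p : Polynomial K := Polynomial.X * g - 1 with hp
    have hpc : ∀ i, p.coeff i ∈ E := by
      intro i
      rw [hp, Polynomial.coeff_sub, Polynomial.coeff_one]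
      cases i with
      | zero => simpa [Polynomial.mul_coeff_zero] using E.neg_mem E.one_mem
      | succ n =>
        rw [Polynomial.coeff_X_mul]
        simpa using hgc n
    have hpe : p.eval t = 0 := by
      rw [hp]
      simp only [Polynomial.eval_sub, Polynomial.eval_mul, Polynomial.eval_X,
        Polynomial.eval_one, hge]
      rw [mul_comm, huval, sub_self]
    have := htE p hpc hpe
    have hc0 : p.coeff 0 = -1 := by
      rw [hp, Polynomial.coeff_sub, Polynomial.mul_coeff_zero]
      simp
    rw [this] at hc0
    simp only [Polynomial.coeff_zero] at hc0
    exact one_ne_zero (neg_eq_zero.mp hc0.symm)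
  obtain ⟨B0, hB0good, -, -⟩ := step E t A0 le_rfl hresE t ht' hJ0
  -- Zorn's lemma
  obtain ⟨Amax, -, hmax⟩ := zorn_le_nonempty₀ (setOf (Good E t)) (by
    intro c hcsub hchain y hy
    obtain ⟨ub, hub, hmem⟩ := chainUB c hchain ⟨y, hy⟩
    refine ⟨ub, ?_, hub⟩
    refine ⟨(hcsub hy).1.trans (hub y hy).1, NU.mono (hub y hy) (hcsub hy).2.1, ?_⟩
    intro c' hc'
    obtain ⟨A, hA, hcA⟩ := hmem c' hc'
    obtain ⟨p, hpm, hpc, hnu⟩ := (hcsub hA).2.2 c' hcA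
    exact ⟨p, hpm, hpc, NU.mono (hub A hA) hnu⟩) B0 hB0good
  have hGoodA : Good E t Amax := hmax.prop
  -- maximality implies maximal in the domination order
  have hismax : IsMax Amax := by
    intro B hB
    have hsub : B.toSubring ≤ Amax.toSubring := by
      intro x hx
      by_contra hxA
      have hS'B' : Subring.closure ((Amax.toSubring : Set K) ∪ {x}) ≤ B.toSubring :=
        Subring.closure_le.mpr (Set.union_subset (fun a ha => hB.1 ha)
          (Set.singleton_subset_iff.mpr hx))
      obtain ⟨htA, -⟩ := hGoodA.2.1
      have ht'' : t ∈ Subring.closure ((Amax.toSubring : Set K) ∪ {x}) :=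
        closure_sub Amax x htA
      have hJ : Ideal.map (Subring.inclusion (closure_sub Amax x))
          (IsLocalRing.maximalIdeal ↥Amax.toSubring) ⊔
          Ideal.span {(⟨t, ht''⟩ : ↥(Subring.closure ((Amax.toSubring : Set K) ∪ {x})))}
          ≠ ⊤ := by
        intro hTop
        have hle : Ideal.map (Subring.inclusion (closure_sub Amax x))
            (IsLocalRing.maximalIdeal ↥Amax.toSubring) ⊔
            Ideal.span {(⟨t, ht''⟩ : ↥(Subring.closure ((Amax.toSubring : Set K) ∪ {x})))} ≤
            Ideal.comap (Subring.inclusion hS'B')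
              (IsLocalRing.maximalIdeal ↥B.toSubring) := by
          refine sup_le ?_ ?_
          · rw [Ideal.map_le_iff_le_comap]
            intro a ha
            show Subring.inclusion hS'B' (Subring.inclusion (closure_sub Amax x) a) ∈
              IsLocalRing.maximalIdeal ↥B.toSubring
            rw [IsLocalRing.mem_maximalIdeal, mem_nonunits_iff]
            intro huB
            have huA : IsUnit a := hB.2.1 (a := a) huB
            exact (mem_nonunits_iff.mp ((IsLocalRing.mem_maximalIdeal a).mp ha)) huA
          · rw [Ideal.span_le]
            rintro y hy
            rw [Set.mem_singleton_iff] at hy; subst hy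
            show Subring.inclusion hS'B' _ ∈ IsLocalRing.maximalIdeal ↥B.toSubring
            obtain ⟨htB, htBnu⟩ := NU.mono hB hGoodA.2.1
            rw [IsLocalRing.mem_maximalIdeal, mem_nonunits_iff]
            exact htBnu
        have h1 : (1 : ↥(Subring.closure ((Amax.toSubring : Set K) ∪ {x}))) ∈
            Ideal.comap (Subring.inclusion hS'B')
              (IsLocalRing.maximalIdeal ↥B.toSubring) := hle (hTop ▸ Submodule.mem_top)
        have h2 : ((1 : ↥B.toSubring) ∈ IsLocalRing.maximalIdeal ↥B.toSubring) := by
          have := h1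
          rwa [Ideal.mem_comap, map_one] at this
        exact (mem_nonunits_iff.mp ((IsLocalRing.mem_maximalIdeal 1).mp h2)) isUnit_one
      obtain ⟨B', hB'good, hAB', hxB'⟩ := step E t Amax hGoodA.1 hGoodA.2.2 x ht'' hJ
      exact hxA ((hmax.2 hB'good hAB').1 hxB')
    have heq : B = Amax := LocalSubring.toSubring_injective (le_antisymm hsub hB.1)
    exact heq ▸ le_rfl
  obtain ⟨O, hO⟩ := LocalSubring.exists_valuationRing_of_isMax hismax
  have hGoodO : Good E t O.toLocalSubring := hO.symm ▸ hGoodA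
  haveI hEinst := hE
  refine ⟨O, ?_, ?_⟩
  · -- O is not the trivial valuation subring
    intro hOtop
    obtain ⟨htm, htnu⟩ := hGoodO.2.1
    apply htnu
    have htinv : t⁻¹ ∈ O.toLocalSubring.toSubring := by
      show t⁻¹ ∈ O.toSubring
      rw [hOtop]
      exact Subring.mem_top _
    exact isUnit_iff_exists_inv.mpr ⟨⟨t⁻¹, htinv⟩, Subtype.ext (mul_inv_cancel₀ ht0)⟩
  · -- the residue field embeds into K
    have hEO : E.toSubring ≤ O.toSubring := hGoodO.1
    haveI : IsLocalRing ↥O.toSubring := O.toLocalSubring.isLocalRing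
    set Rf := IsLocalRing.ResidueField ↥O.toSubring with hRf
    set θ : ↥O.toSubring →+* Rf := IsLocalRing.residue ↥O.toSubring with hθdef
    set ψ : ↥E.toSubring →+* Rf := θ.comp (inclE E hEO) with hψdef
    set EbarO : Subfield Rf := ERange E ψ with hEbarO
    have hint : ∀ a : ↥O.toSubring, IsIntegral ↥EbarO (θ a) := by
      intro a
      obtain ⟨p, hpm, hpc, hmem, hnu⟩ := hGoodO.2.2 a.1 a.2
      have h0 : θ ⟨p.eval (a : K), hmem⟩ = 0 := by
        refine Ideal.Quotient.eq_zero_iff_mem.mpr ?_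
        exact (IsLocalRing.mem_maximalIdeal _).mpr (mem_nonunits_iff.mpr hnu)
      exact isIntegral_of_poly E hEO θ EbarO (fun e => ⟨e, rfl⟩) a p hpm hpc hmem h0
    haveI halg : Algebra.IsAlgebraic ↥EbarO Rf := by
      constructor
      intro r
      obtain ⟨a, rfl⟩ := IsLocalRing.residue_surjective (R := ↥O.toSubring) r
      exact (hint a).isAlgebraic
    set eE : ↥E ≃+* ↥E.toSubring := subfieldEquivSubring E with heE
    have hinjψ : ∀ e : ↥E.toSubring, e ≠ 0 → ψ e ≠ 0 := by
      intro e he h0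
      have he1 : (e : K) ≠ 0 := fun h => he (Subtype.ext h)
      have hi : (e : K)⁻¹ ∈ E.toSubring := E.inv_mem e.2
      have h2 : ψ e * ψ ⟨(e : K)⁻¹, hi⟩ = 1 := by
        rw [← map_mul, show e * (⟨(e : K)⁻¹, hi⟩ : ↥E.toSubring) = 1 from
          Subtype.ext (mul_inv_cancel₀ he1), map_one]
      rw [h0, zero_mul] at h2
      exact zero_ne_one h2
    set χ : ↥E →+* ↥EbarO :=
      (ψ.comp eE.toRingHom).codRestrict EbarO (fun e => ⟨eE e, rfl⟩) with hχdef
    have hχbij : Function.Bijective χ := by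
      constructor
      · intro a b hab
        by_contra hne
        refine hinjψ (eE a - eE b) (sub_ne_zero.mpr (fun h => hne (eE.injective h))) ?_
        rw [map_sub, sub_eq_zero]
        exact congrArg Subtype.val hab
      · rintro ⟨y, e, rfl⟩
        refine ⟨eE.symm e, Subtype.ext ?_⟩
        show ψ (eE (eE.symm e)) = ψ e
        rw [RingEquiv.apply_symm_apply]
    haveI : IsAlgClosed ↥EbarO :=
      IsAlgClosed.of_ringEquiv ↥E ↥EbarO (RingEquiv.ofBijective χ hχbij)
    haveI : Module.IsTorsionFree ↥EbarO Rf := inferInstance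
    set lift : Rf →ₐ[↥EbarO] ↥EbarO := IsAlgClosed.lift (M := ↥EbarO) (R := ↥EbarO) (S := Rf)
    exact ⟨E.subtype.comp ((RingEquiv.ofBijective χ hχbij).symm.toRingHom.comp lift.toRingHom)⟩

end Key

section ModelTheory

open FirstOrder.Ring

theorem ringStructure_eq {R : Type*} (S₁ S₂ : Language.ring.Structure R)
    (h : ∀ (n : ℕ) (f : Language.ring.Functions n) (x : Fin n → R),
      S₁.funMap f x = S₂.funMap f x) : S₁ = S₂ := by
  rcases S₁ with ⟨f₁, r₁⟩
  rcases S₂ with ⟨f₂, r₂⟩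
  have hf : @f₁ = @f₂ := by
    funext n f x
    exact h n f x
  subst hf
  have hr : @r₁ = @r₂ := by
    funext n r x
    cases r
  subst hr
  rfl

theorem compatible_structure_eq {R : Type*} [Add R] [Mul R] [Neg R] [One R] [Zero R]
    (c₁ c₂ : CompatibleRing R) : c₁.toStructure = c₂.toStructure := by
  refine ringStructure_eq _ _ ?_
  intro n f x
  cases f with
  | add => rw [c₁.funMap_add, c₂.funMap_add]
  | mul => rw [c₁.funMap_mul, c₂.funMap_mul]
  | neg => rw [c₁.funMap_neg, c₂.funMap_neg]
  | zero => rw [c₁.funMap_zero, c₂.funMap_zero]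
  | one => rw [c₁.funMap_one, c₂.funMap_one]

theorem realize_congr_structure {R : Type*} (S₁ S₂ : Language.ring.Structure R) (h : S₁ = S₂)
    {n : ℕ} (φ : Language.ring.Formula (Fin n)) (v : Fin n → R) :
    (@Language.Formula.Realize Language.ring R S₁ _ φ v) ↔
      (@Language.Formula.Realize Language.ring R S₂ _ φ v) := by
  subst h; rfl

end ModelTheory

section Ext

open FirstOrder.Ring Cardinal

set_option maxHeartbeats 1000000 in
theorem exists_big_elementary_ext (F : Type u) [Field F] [Infinite F] :
    ∃ (Fs : Type u) (i : Field Fs),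
      letI := i
      ∃ f : F →+* Fs, IsElementaryRingHom f ∧ Cardinal.mk F < Cardinal.mk Fs := by
  classical
  letI cF := Ring.compatibleRingOfRing F
  set κ : Cardinal.{u} := Order.succ (Cardinal.mk F) with hκ
  have hκinf : ℵ₀ ≤ κ := (Cardinal.aleph0_le_mk F).trans (Order.le_succ _)
  have h1 : Cardinal.lift.{u} Language.ring.card ≤ Cardinal.lift.{0} κ := by
    rw [FirstOrder.Ring.card_ring]
    have h5 : (5 : Cardinal.{0}) ≤ ℵ₀ := le_of_lt (Cardinal.nat_lt_aleph0 5)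
    calc Cardinal.lift.{u} (5 : Cardinal.{0}) ≤ Cardinal.lift.{u} ℵ₀ :=
          Cardinal.lift_le.mpr h5
      _ = ℵ₀ := by simp
      _ ≤ κ := hκinf
      _ = Cardinal.lift.{0} κ := by simp
  have h2 : Cardinal.lift.{u} (Cardinal.mk F) ≤ Cardinal.lift.{u} κ :=
    Cardinal.lift_le.mpr (Order.le_succ _)
  obtain ⟨N, ⟨g⟩, hNcard⟩ :=
    Language.exists_elementaryEmbedding_card_eq_of_ge Language.ring F κ h1 h2
  haveI hfieldModel : Language.Theory.field.Model N :=
    (g.theory_model_iff Language.Theory.field).mp inferInstance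
  have hformula := fun (n : ℕ) (φ : Language.ring.Formula (Fin n)) (v : Fin n → F) =>
    g.map_formula φ v
  letI iN : Field N := FirstOrder.Field.fieldOfModelField N
  letI cN : CompatibleRing N := FirstOrder.Field.compatibleRingOfModelField N
  have hcNstr : cN.toStructure = CategoryTheory.Bundled.structure N := rfl
  set f : F →+* N :=
    { toFun := g
      map_one' := by
        have h := g.map_fun FirstOrder.Ring.oneFunc default
        rwa [CompatibleRing.funMap_one, CompatibleRing.funMap_one] at h
      map_zero' := by
        have h := g.map_fun FirstOrder.Ring.zeroFunc default
        rwa [CompatibleRing.funMap_zero, CompatibleRing.funMap_zero] at h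
      map_mul' := fun x y => by
        have h := g.map_fun FirstOrder.Ring.mulFunc ![x, y]
        rw [CompatibleRing.funMap_mul, CompatibleRing.funMap_mul] at h
        simpa using h
      map_add' := fun x y => by
        have h := g.map_fun FirstOrder.Ring.addFunc ![x, y]
        rw [CompatibleRing.funMap_add, CompatibleRing.funMap_add] at h
        simpa using h } with hf
  refine ⟨N, iN, f, ?_, ?_⟩
  · intro n φ v
    letI c' := Ring.compatibleRingOfRing N
    have hstr : c'.toStructure = CategoryTheory.Bundled.structure N :=
      (compatible_structure_eq c' cN).trans hcNstr
    have h1 := hformula n φ v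
    have h2 := realize_congr_structure c'.toStructure (CategoryTheory.Bundled.structure N)
      hstr φ (⇑f ∘ v)
    exact h2.trans h1
  · rw [hNcard]
    exact Order.lt_succ (Cardinal.mk F)

end Ext


section MemPoly

variable {K : Type v} [Field K]
open Polynomial

theorem mem_of_monic_poly (E : Subfield K) (hE : IsAlgClosed ↥E) (t : K) (p : Polynomial K)
    (hm : p.Monic) (hc : ∀ i, p.coeff i ∈ E) (h0 : p.eval t = 0) : t ∈ E := by
  haveI := hE
  have hfr : ↑p.coeffs ⊆ (E.toSubring : Set K) := by
    intro c hcm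
    simp only [Finset.mem_coe, Polynomial.mem_coeffs_iff] at hcm
    obtain ⟨i, _, rfl⟩ := hcm
    exact hc i
  set q : Polynomial ↥E :=
    (p.toSubring E.toSubring hfr).map (subfieldEquivSubring E).symm.toRingHom with hq
  have hqm : q.Monic := ((Polynomial.monic_toSubring _ _ _).mpr hm).map _
  have hint : IsIntegral ↥E t := by
    refine ⟨q, hqm, ?_⟩
    have hmap : q.map (algebraMap ↥E K) = p := by
      rw [hq, Polynomial.map_map]
      have : (algebraMap ↥E K).comp (subfieldEquivSubring E).symm.toRingHom
          = E.toSubring.subtype := rfl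
      rw [this, Polynomial.map_toSubring]
    rw [Polynomial.eval₂_eq_eval_map, hmap]
    exact h0
  have hirr := minpoly.irreducible hint
  have hdeg := IsAlgClosed.degree_eq_one_of_irreducible ↥E hirr
  rw [minpoly.degree_eq_one_iff] at hdeg
  obtain ⟨y, hy⟩ := hdeg
  have : (y : K) = t := hy
  exact this ▸ y.2


end MemPoly

set_option maxHeartbeats 1000000 in
set_option synthInstance.maxHeartbeats 1000000 in
/-- A field containing an algebraically closed subfield has embedded residue: some elementary
extension `F ⪯ F*` carries a nontrivial valuation whose residue field embeds into `F*`. -/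
theorem stmt_11 (F : Type u) [Field F] (D : Subfield F) (hD : IsAlgClosed ↥D) :
    ∃ (Fs : Type u) (i : Field Fs),
      letI := i
      ∃ f : F →+* Fs, IsElementaryRingHom f ∧
        ∃ O : ValuationSubring Fs, O ≠ ⊤ ∧
          Nonempty (IsLocalRing.ResidueField ↥O →+* Fs) := by
  classical
  haveI := hD
  haveI : Infinite ↥D := inferInstance
  haveI : Infinite F := Infinite.of_injective (fun d : ↥D => (d : F)) Subtype.coe_injective
  obtain ⟨Fs, iF, f, hf, hcard⟩ := exists_big_elementary_ext F
  refine ⟨Fs, iF, f, hf, ?_⟩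
  letI := iF
  set g : ↥D →+* Fs := f.comp D.subtype with hg
  have hginj : Function.Injective g := g.injective
  set E : Subfield Fs := g.fieldRange with hEdef
  set e : ↥D ≃+* ↥E := RingEquiv.ofBijective
    (g.codRestrict E (fun d => RingHom.mem_fieldRange.mpr ⟨d, rfl⟩))
    (by
      constructor
      · intro a b hab
        exact hginj (congrArg Subtype.val hab)
      · rintro ⟨y, hy⟩
        obtain ⟨d, hd⟩ := RingHom.mem_fieldRange.mp hy
        exact ⟨d, Subtype.ext hd⟩) with he
  haveI hEalg : IsAlgClosed ↥E := IsAlgClosed.of_ringEquiv ↥D ↥E e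
  have hEcard : Cardinal.mk ↥E ≤ Cardinal.mk F := by
    have h1 : Cardinal.mk ↥E = Cardinal.mk ↥D := (Cardinal.mk_congr e.toEquiv).symm
    rw [h1]
    exact Cardinal.mk_le_of_injective (f := fun d : ↥D => (d : F)) Subtype.coe_injective
  obtain ⟨t, htnot⟩ : ∃ t : Fs, t ∉ E := by
    by_contra h
    push_neg at h
    have hle : Cardinal.mk Fs ≤ Cardinal.mk ↥E :=
      Cardinal.mk_le_of_injective (f := fun x : Fs => (⟨x, h x⟩ : ↥E))
        (fun a b hab => congrArg Subtype.val hab)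
    exact absurd (hle.trans hEcard) (not_le.mpr hcard)
  have htrans : ∀ p : Polynomial Fs, (∀ i, p.coeff i ∈ E) → p.eval t = 0 → p = 0 := by
    intro p hc h0
    by_contra hp0
    apply htnot
    set p' := p * Polynomial.C p.leadingCoeff⁻¹ with hp'
    have hm : p'.Monic := Polynomial.monic_mul_leadingCoeff_inv hp0
    have hc' : ∀ i, p'.coeff i ∈ E := by
      intro i
      rw [hp', Polynomial.coeff_mul_C]
      exact E.mul_mem (hc i) (E.inv_mem (hc p.natDegree))
    have h0' : p'.eval t = 0 := by rw [hp', Polynomial.eval_mul, h0, zero_mul]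
    exact mem_of_monic_poly E hEalg t p' hm hc' h0'
  obtain ⟨O, hOne, hemb⟩ := key E hEalg t htrans
  exact ⟨O, hOne, hemb⟩
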